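/- In Rulesets A, B and D, the Grundy value of a superposition of single Nim heaps depends only on the size of the largest heap in the superposition: if two superpositions of single Nim heaps have the same maximum heap size, they have the same Grundy value. -/
import Mathlib


namespace QGame

variable {Pos Move : Type} [DecidableEq Pos]

/-- Result of applying the superposed move `M` (a finite set of classical move
labels) to the superposition `S` of classical positions: the set of all results
of a classical move of `M` applied to a realisation where it is legal. -/
def qApply (Γ : Pos → Move → Option Pos) (S : Finset Pos) (M : Finset Move) :
    Finset Pos :=
  S.biUnion fun G => M.biUnion fun m => (Γ G m).toFinset

/-- The classical move `m` is legal in at least one realisation of `S`. -/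
def MoveLegal (Γ : Pos → Move → Option Pos) (S : Finset Pos) (m : Move) : Prop :=
  ∃ G ∈ S, (Γ G m).isSome

/-- Basic legality of a Q-move: nonempty, and each classical move is legal
in at least one realisation. -/
def QBase (Γ : Pos → Move → Option Pos) (S : Finset Pos) (M : Finset Move) : Prop :=
  M.Nonempty ∧ ∀ m ∈ M, MoveLegal Γ S m

/-- Ruleset A : superpositions of at least two distinct classical moves. -/
def QLegalA (Γ : Pos → Move → Option Pos) (S : Finset Pos) (M : Finset Move) : Prop :=
  QBase Γ S M ∧ 2 ≤ M.card

/-- Ruleset B : as A, except a lone classical move may be played when it is the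
only legal classical move over all realisations. -/
def QLegalB (Γ : Pos → Move → Option Pos) (S : Finset Pos) (M : Finset Move) : Prop :=
  QBase Γ S M ∧ (2 ≤ M.card ∨ ∀ m, MoveLegal Γ S m → m ∈ M)

/-- Ruleset C : a lone classical move must be legal in every realisation. -/
def QLegalC (Γ : Pos → Move → Option Pos) (S : Finset Pos) (M : Finset Move) : Prop :=
  QBase Γ S M ∧ (2 ≤ M.card ∨ ∀ G ∈ S, ∀ m ∈ M, (Γ G m).isSome)

/-- A single classical move is C'-allowed: legal in every realisation where the
mover still has at least one classical move. -/
def SingleLegalC' (Γ : Pos → Move → Option Pos) (S : Finset Pos) (m : Move) : Prop :=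
  ∀ G ∈ S, (∃ m', (Γ G m').isSome) → (Γ G m).isSome

/-- Ruleset C'. -/
def QLegalC' (Γ : Pos → Move → Option Pos) (S : Finset Pos) (M : Finset Move) : Prop :=
  QBase Γ S M ∧ (2 ≤ M.card ∨ ∀ m ∈ M, SingleLegalC' Γ S m)

/-- Ruleset D : any nonempty superposition of legal classical moves. -/
def QLegalD (Γ : Pos → Move → Option Pos) (S : Finset Pos) (M : Finset Move) : Prop :=
  QBase Γ S M

def optA (Γ : Pos → Move → Option Pos) (S : Finset Pos) : Set (Finset Pos) :=
  {T | ∃ M, QLegalA Γ S M ∧ T = qApply Γ S M}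
def optB (Γ : Pos → Move → Option Pos) (S : Finset Pos) : Set (Finset Pos) :=
  {T | ∃ M, QLegalB Γ S M ∧ T = qApply Γ S M}
def optC (Γ : Pos → Move → Option Pos) (S : Finset Pos) : Set (Finset Pos) :=
  {T | ∃ M, QLegalC Γ S M ∧ T = qApply Γ S M}
def optC' (Γ : Pos → Move → Option Pos) (S : Finset Pos) : Set (Finset Pos) :=
  {T | ∃ M, QLegalC' Γ S M ∧ T = qApply Γ S M}
def optD (Γ : Pos → Move → Option Pos) (S : Finset Pos) : Set (Finset Pos) :=
  {T | ∃ M, QLegalD Γ S M ∧ T = qApply Γ S M}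

/-- `NPos opt p` : under normal play, the player to move from `p` wins,
i.e. there is a move to a position all of whose options are again `NPos`
(that is, to a previous-player-win position). -/
inductive NPos {α : Type*} (opt : α → Set α) : α → Prop where
  | mk (p q : α) (hq : q ∈ opt p) (h : ∀ r, r ∈ opt q → NPos opt r) :
      NPos opt p

/-- `PPos opt p` : `p` is a previous-player win (the second player wins)
under normal play: every option is a next-player win. -/
def PPos {α : Type*} (opt : α → Set α) (p : α) : Prop :=
  ∀ q ∈ opt p, NPos opt q

/-- Options of the sum of a game with a classical Nim heap: move in the game
component, or decrease the heap component. -/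
def sumNimOpt {α : Type*} (opt : α → Set α) : α × ℕ → Set (α × ℕ) :=
  fun x => {y | (y.1 ∈ opt x.1 ∧ y.2 = x.2) ∨ (y.1 = x.1 ∧ y.2 < x.2)}

/-- `HasGrundy opt p n` : position `p` has Sprague–Grundy value `n` (the value
obtained by the mex rule). By the Sprague–Grundy theorem this holds iff the sum
of `p` with a Nim heap of `n` tokens is a previous-player win. -/
def HasGrundy {α : Type*} (opt : α → Set α) (p : α) (n : ℕ) : Prop :=
  PPos (sumNimOpt opt) (p, n)

/-- Classical single-heap Nim: from a heap of `n` tokens, the move labelled `x`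
removes `x` tokens, legal when `1 ≤ x ≤ n`. -/
def nimΓ : ℕ → ℕ → Option ℕ := fun n x =>
  if 1 ≤ x ∧ x ≤ n then some (n - x) else none

end QGame

namespace QGame


section Aux

lemma nim_isSome {G m : ℕ} : (nimΓ G m).isSome ↔ 1 ≤ m ∧ m ≤ G := by
  unfold nimΓ; split <;> simp_all

lemma mem_qApply_nim {S M : Finset ℕ} {x : ℕ} :
    x ∈ qApply nimΓ S M ↔ ∃ G ∈ S, ∃ m ∈ M, 1 ≤ m ∧ m ≤ G ∧ G - m = x := by
  simp only [qApply, Finset.mem_biUnion, Option.mem_toFinset]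
  constructor
  · rintro ⟨G, hG, m, hm, hx⟩
    unfold nimΓ at hx
    split at hx
    · simp only [Option.mem_def, Option.some_inj] at hx
      exact ⟨G, hG, m, hm, by omega, by omega, hx⟩
    · simp at hx
  · rintro ⟨G, hG, m, hm, h1, h2, rfl⟩
    exact ⟨G, hG, m, hm, by simp [nimΓ, h1, h2]⟩

lemma moveLegal_iff {S : Finset ℕ} (hS : S.Nonempty) {m : ℕ} :
    MoveLegal nimΓ S m ↔ 1 ≤ m ∧ m ≤ S.max' hS := by
  constructor
  · rintro ⟨G, hG, hsome⟩
    rw [nim_isSome] at hsome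
    exact ⟨hsome.1, hsome.2.trans (Finset.le_max' _ _ hG)⟩
  · rintro ⟨h1, h2⟩
    exact ⟨_, S.max'_mem hS, nim_isSome.mpr ⟨h1, h2⟩⟩

lemma qApply_nonempty {S M : Finset ℕ} (h : QBase nimΓ S M) :
    (qApply nimΓ S M).Nonempty := by
  obtain ⟨⟨m, hm⟩, hleg⟩ := h
  obtain ⟨G, hG, hs⟩ := hleg m hm
  rw [nim_isSome] at hs
  exact ⟨G - m, mem_qApply_nim.mpr ⟨G, hG, m, hm, hs.1, hs.2, rfl⟩⟩

lemma qApply_max' {S M : Finset ℕ} (hS : S.Nonempty) (h : QBase nimΓ S M) :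
    (qApply nimΓ S M).max' (qApply_nonempty h) = S.max' hS - M.min' h.1 := by
  apply le_antisymm
  · apply Finset.max'_le
    intro x hx
    obtain ⟨G, hG, m, hm, h1, h2, rfl⟩ := mem_qApply_nim.mp hx
    have hG' := Finset.le_max' S G hG
    have hm' := Finset.min'_le M m hm
    omega
  · apply Finset.le_max'
    obtain ⟨G0, hG0, hs⟩ := h.2 (M.min' h.1) (M.min'_mem h.1)
    rw [nim_isSome] at hs
    exact mem_qApply_nim.mpr ⟨S.max' hS, S.max'_mem hS, M.min' h.1, M.min'_mem h.1,
      hs.1, hs.2.trans (Finset.le_max' S G0 hG0), rfl⟩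

/-- The relation: same (well-defined) maximum. -/
def MRel (S T : Finset ℕ) : Prop :=
  ∃ hS : S.Nonempty, ∃ hT : T.Nonempty, S.max' hS = T.max' hT

lemma MRel.symm {S T : Finset ℕ} (h : MRel S T) : MRel T S := by
  obtain ⟨hS, hT, h⟩ := h; exact ⟨hT, hS, h.symm⟩

lemma moveLegal_congr {S T : Finset ℕ} (h : MRel S T) {m : ℕ} :
    MoveLegal nimΓ S m ↔ MoveLegal nimΓ T m := by
  obtain ⟨hS, hT, h⟩ := h
  rw [moveLegal_iff hS, moveLegal_iff hT, h]

lemma qbase_congr {S T : Finset ℕ} (h : MRel S T) {M : Finset ℕ} :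
    QBase nimΓ S M ↔ QBase nimΓ T M := by
  unfold QBase
  constructor <;> rintro ⟨h1, h2⟩ <;>
    exact ⟨h1, fun m hm => (moveLegal_congr (by first | exact h | exact h.symm)).mp (h2 m hm)⟩

lemma mrel_qApply {S T : Finset ℕ} (h : MRel S T) {M : Finset ℕ}
    (hb : QBase nimΓ S M) : MRel (qApply nimΓ S M) (qApply nimΓ T M) := by
  obtain ⟨hS, hT, hmax⟩ := h
  have hb' : QBase nimΓ T M := (qbase_congr ⟨hS, hT, hmax⟩).mp hb
  refine ⟨qApply_nonempty hb, qApply_nonempty hb', ?_⟩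
  rw [qApply_max' hS hb, qApply_max' hT hb', hmax]

/-- Bisimulation. -/
def Bisim {α : Type*} (opt : α → Set α) (R : α → α → Prop) : Prop :=
  ∀ a b, R a b → (∀ a' ∈ opt a, ∃ b' ∈ opt b, R a' b') ∧
    (∀ b' ∈ opt b, ∃ a' ∈ opt a, R a' b')

lemma bisim_of_step {α : Type*} {opt : α → Set α} {R : α → α → Prop}
    (hsymm : ∀ a b, R a b → R b a)
    (hstep : ∀ a b, R a b → ∀ a' ∈ opt a, ∃ b' ∈ opt b, R a' b') :
    Bisim opt R := by
  intro a b hab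
  refine ⟨hstep a b hab, fun b' hb' => ?_⟩
  obtain ⟨a', ha', h⟩ := hstep b a (hsymm a b hab) b' hb'
  exact ⟨a', ha', hsymm _ _ h⟩

lemma NPos_of_bisim {α : Type*} {opt : α → Set α} {R : α → α → Prop}
    (hbis : Bisim opt R) {p : α} (hp : NPos opt p) :
    ∀ q, R p q → NPos opt q := by
  induction hp with
  | mk p r hr h ih =>
    intro q hq
    obtain ⟨r', hr', hRr⟩ := (hbis p q hq).1 r hr
    refine NPos.mk q r' hr' ?_
    intro s' hs'
    obtain ⟨s, hs, hRs⟩ := (hbis r r' hRr).2 s' hs'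
    exact ih s hs s' hRs

lemma PPos_of_bisim {α : Type*} {opt : α → Set α} {R : α → α → Prop}
    (hbis : Bisim opt R) {p q : α} (h : R p q) (hp : PPos opt p) :
    PPos opt q := by
  intro q' hq'
  obtain ⟨p', hp', hR⟩ := (hbis p q h).2 q' hq'
  exact NPos_of_bisim hbis (hp p' hp') q' hR

lemma sum_bisim {opt : Finset ℕ → Set (Finset ℕ)}
    (hstep : ∀ S T, MRel S T → ∀ S' ∈ opt S, ∃ T' ∈ opt T, MRel S' T') :
    Bisim (sumNimOpt opt) (fun x y => MRel x.1 y.1 ∧ x.2 = y.2) := by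
  apply bisim_of_step
  · rintro a b ⟨h1, h2⟩; exact ⟨h1.symm, h2.symm⟩
  · rintro ⟨S, n⟩ ⟨T, m⟩ ⟨hR, heq⟩ ⟨S', n'⟩ hS'
    obtain rfl : m = n := heq.symm
    rcases hS' with ⟨hopt, rfl⟩ | ⟨rfl, hlt⟩
    · obtain ⟨T', hT', hR'⟩ := hstep S T hR S' hopt
      exact ⟨(T', n'), Or.inl ⟨hT', rfl⟩, hR', rfl⟩
    · exact ⟨(T, n'), Or.inr ⟨rfl, hlt⟩, hR, rfl⟩

lemma hasGrundy_congr {opt : Finset ℕ → Set (Finset ℕ)}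
    (hstep : ∀ S T, MRel S T → ∀ S' ∈ opt S, ∃ T' ∈ opt T, MRel S' T')
    {S T : Finset ℕ} (h : MRel S T) (n : ℕ) :
    HasGrundy opt S n ↔ HasGrundy opt T n := by
  have hbis := sum_bisim hstep
  exact ⟨PPos_of_bisim hbis ⟨h, rfl⟩, PPos_of_bisim hbis ⟨h.symm, rfl⟩⟩

lemma stepA : ∀ S T, MRel S T → ∀ S' ∈ optA nimΓ S, ∃ T' ∈ optA nimΓ T, MRel S' T' := by
  rintro S T h S' ⟨M, ⟨hb, hc⟩, rfl⟩
  exact ⟨qApply nimΓ T M, ⟨M, ⟨(qbase_congr h).mp hb, hc⟩, rfl⟩, mrel_qApply h hb⟩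

lemma stepB : ∀ S T, MRel S T → ∀ S' ∈ optB nimΓ S, ∃ T' ∈ optB nimΓ T, MRel S' T' := by
  rintro S T h S' ⟨M, ⟨hb, hc⟩, rfl⟩
  refine ⟨qApply nimΓ T M, ⟨M, ⟨(qbase_congr h).mp hb, ?_⟩, rfl⟩, mrel_qApply h hb⟩
  rcases hc with hc | hc
  · exact Or.inl hc
  · exact Or.inr fun m hm => hc m ((moveLegal_congr h).mpr hm)

lemma stepD : ∀ S T, MRel S T → ∀ S' ∈ optD nimΓ S, ∃ T' ∈ optD nimΓ T, MRel S' T' := by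
  rintro S T h S' ⟨M, hb, rfl⟩
  exact ⟨qApply nimΓ T M, ⟨M, (qbase_congr h).mp hb, rfl⟩, mrel_qApply h hb⟩

end Aux

/-- in Rulesets A, B and D, the Grundy value of a superposition
of single Nim heaps depends only on the size of its largest heap. -/
theorem value_depends_only_on_max (S T : Finset ℕ) (hS : S.Nonempty)
    (hT : T.Nonempty) (h : S.max' hS = T.max' hT) :
    (∀ n, HasGrundy (optA nimΓ) S n ↔ HasGrundy (optA nimΓ) T n) ∧
    (∀ n, HasGrundy (optB nimΓ) S n ↔ HasGrundy (optB nimΓ) T n) ∧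
    (∀ n, HasGrundy (optD nimΓ) S n ↔ HasGrundy (optD nimΓ) T n) := by
  have hR : MRel S T := ⟨hS, hT, h⟩
  exact ⟨hasGrundy_congr stepA hR, hasGrundy_congr stepB hR, hasGrundy_congr stepD hR⟩

end QGame
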